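/- Let P(z_2, ..., z_m, z̄_2, ..., z̄_m) be a nonzero real polynomial such that P(z, z̄) ≥ 0 for all z ∈ ℂ^{m-1}. Then the expansion of P contains a nonzero balanced monomial, i.e., a monomial of the form C |z_2|^{2α_2} |z_3|^{2α_3} ⋯ |z_m|^{2α_m} with C > 0, which can moreover be chosen to maximize the multidegree in (z_2, z̄_2), ..., (z_m, z̄_m) among balanced monomials in the reverse lexicographic order. -/

import Mathlib

open Complex Finset

/-- Reverse lexicographic order on multidegrees: `α ≤ β` iff they are equal or, at the
largest index where they differ, `α` is smaller. -/
def RevLexLE {n : ℕ} (α β : Fin n → ℕ) : Prop :=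
  α = β ∨ ∃ j : Fin n, α j < β j ∧ ∀ i : Fin n, j < i → α i = β i

lemma geom_aux (K : ℕ) (hK : 0 < K) : ∀ m, (∑ t ∈ range m, (K-1)*K^t) + 1 = K^m := by
  intro m
  induction m with
  | zero => simp
  | succ m ih =>
    rw [Finset.sum_range_succ]
    have h1 : (K-1)*K^m = K^(m+1) - K^m := by rw [Nat.sub_mul, one_mul, pow_succ, Nat.mul_comm]
    have h2 : K^m ≤ K^(m+1) := Nat.pow_le_pow_right hK (by omega)
    have h3 : 0 < K^m := Nat.pow_pos hK
    omega

lemma sum_split {n : ℕ} (j : Fin n) (f : Fin n → ℕ) :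
    ∑ i, f i = (∑ i ∈ Iio j, f i) + f j + ∑ i ∈ Ioi j, f i := by
  have h1 : (univ : Finset (Fin n)) = Iio j ∪ Ici j := by
    ext i
    simp only [mem_univ, mem_union, mem_Iio, mem_Ici, true_iff]
    rcases lt_or_ge i j with h | h
    · exact Or.inl h
    · exact Or.inr h
  have h2 : Disjoint (Iio j) (Ici j) := by
    simp only [Finset.disjoint_left, mem_Iio, mem_Ici]
    intro a ha; exact not_le.mpr ha
  rw [h1, Finset.sum_union h2, ← Finset.Ioi_insert, Finset.sum_insert (by simp), add_assoc]

lemma weight_lt {n K : ℕ} {α β : Fin n → ℕ} (hα : ∀ i, α i < K)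
    (j : Fin n) (hj : α j < β j) (htail : ∀ i, j < i → α i = β i) :
    ∑ i, α i * K ^ (i : ℕ) < ∑ i, β i * K ^ (i : ℕ) := by
  have hK : 0 < K := lt_of_le_of_lt (Nat.zero_le _) (hα j)
  rw [sum_split j, sum_split j (fun i => β i * K ^ (i:ℕ))]
  have htail' : ∑ i ∈ Ioi j, α i * K ^ (i:ℕ) = ∑ i ∈ Ioi j, β i * K ^ (i:ℕ) := by
    apply Finset.sum_congr rfl; intro i hi; rw [htail i (Finset.mem_Ioi.mp hi)]
  rw [htail']
  apply Nat.add_lt_add_right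
  have hlow : ∑ i ∈ Iio j, α i * K ^ (i:ℕ) < K ^ (j : ℕ) := by
    have e1 : ∑ i ∈ Iio j, α i * K ^ (i:ℕ) ≤ ∑ i ∈ Iio j, (K-1) * K ^ (i:ℕ) := by
      apply Finset.sum_le_sum; intro i _
      exact Nat.mul_le_mul_right _ (Nat.le_sub_one_of_lt (hα i))
    have e2 : ∑ i ∈ Iio j, (K-1) * K ^ (i:ℕ) = ∑ t ∈ range (j:ℕ), (K-1) * K ^ t := by
      rw [← Nat.Iio_eq_range, ← Fin.map_valEmbedding_Iio, Finset.sum_map]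
      rfl
    have e3 := geom_aux K hK (j : ℕ)
    omega
  calc (∑ i ∈ Iio j, α i * K ^ (i:ℕ)) + α j * K ^ (j:ℕ)
      < K ^ (j:ℕ) + α j * K ^ (j:ℕ) := by omega
    _ = (α j + 1) * K ^ (j:ℕ) := by ring
    _ ≤ β j * K ^ (j:ℕ) := Nat.mul_le_mul_right _ hj
    _ ≤ (∑ i ∈ Iio j, β i * K ^ (i:ℕ)) + β j * K ^ (j:ℕ) := Nat.le_add_left _ _

lemma exists_max_diff {n : ℕ} {α β : Fin n → ℕ} (h : α ≠ β) :
    ∃ j, α j ≠ β j ∧ ∀ i, j < i → α i = β i := by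
  have hne : (univ.filter (fun i => α i ≠ β i)).Nonempty := by
    rw [Finset.filter_nonempty_iff]
    by_contra hc
    push_neg at hc
    exact h (funext fun i => hc i (mem_univ i))
  obtain ⟨j, hj, hmax⟩ := Finset.exists_max_image _ id hne
  refine ⟨j, (Finset.mem_filter.mp hj).2, fun i hi => ?_⟩
  by_contra hc
  exact absurd (hmax i (Finset.mem_filter.mpr ⟨mem_univ i, hc⟩)) (not_le.mpr hi)

lemma orth (K : ℕ) (hK : 0 < K) (a b : ℕ) (ha : a < K) (hb : b < K) :
    ∑ t : Fin K, (Complex.exp (2*Real.pi*Complex.I/K) ^ a *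
      (starRingEnd ℂ) (Complex.exp (2*Real.pi*Complex.I/K)) ^ b) ^ (t:ℕ)
      = if a = b then (K:ℂ) else 0 := by
  set ω : ℂ := Complex.exp (2*Real.pi*Complex.I/K) with hω
  have hKc : (K:ℂ) ≠ 0 := Nat.cast_ne_zero.mpr hK.ne'
  have hconj : (starRingEnd ℂ) ω = Complex.exp (-(2*Real.pi*Complex.I/K)) := by
    rw [hω, ← Complex.exp_conj]
    congr 1
    rw [map_div₀, map_mul, map_mul, Complex.conj_I, map_ofNat]
    simp
    ring
  have hu : ω ^ a * (starRingEnd ℂ) ω ^ b = Complex.exp (((a:ℂ)-(b:ℂ)) * (2*Real.pi*Complex.I/K)) := by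
    rw [hconj, hω, ← Complex.exp_nat_mul, ← Complex.exp_nat_mul, ← Complex.exp_add]
    congr 1
    ring
  rw [hu]
  by_cases hab : a = b
  · subst hab
    simp
  · rw [if_neg hab]
    set u : ℂ := Complex.exp (((a:ℂ)-(b:ℂ)) * (2*Real.pi*Complex.I/K)) with hudef
    have huK : u ^ K = 1 := by
      rw [hudef, ← Complex.exp_nat_mul]
      have : (K:ℂ) * (((a:ℂ)-(b:ℂ)) * (2*Real.pi*Complex.I/K)) = ((((a:ℤ)-(b:ℤ)):ℤ):ℂ) * (2*Real.pi*Complex.I) := by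
        field_simp
        simp
      rw [this, Complex.exp_int_mul_two_pi_mul_I]
    have hune : u ≠ 1 := by
      rw [hudef]
      intro h
      rw [Complex.exp_eq_one_iff] at h
      obtain ⟨m, hm⟩ := h
      have h2pi : (2*(Real.pi:ℂ)*Complex.I) ≠ 0 := by
        simp [Complex.I_ne_zero, Real.pi_ne_zero]
      have : ((a:ℂ)-(b:ℂ)) = m * K := by
        field_simp at hm
        have hm' : ((a:ℂ)-(b:ℂ)) * (2*(Real.pi:ℂ)*Complex.I) = (m * K) * (2*(Real.pi:ℂ)*Complex.I) := by
          linear_combination (2*(Real.pi:ℂ)*Complex.I) * hm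
        exact mul_right_cancel₀ h2pi hm'
      have hint : (a:ℤ) - (b:ℤ) = m * K := by
        have := this
        push_cast at this
        exact_mod_cast this
      have haK : (a:ℤ) < K := by exact_mod_cast ha
      have hbK : (b:ℤ) < K := by exact_mod_cast hb
      have habz : (a:ℤ) ≠ (b:ℤ) := fun h => hab (by exact_mod_cast h)
      rcases lt_trichotomy m 0 with hm0 | hm0 | hm0
      · have : m * (K:ℤ) ≤ -K := by
          have : m ≤ -1 := by omega
          nlinarith [Int.ofNat_nonneg K]
        omega
      · subst hm0; simp at hint; omega
      · have : (K:ℤ) ≤ m * K := by nlinarith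
        omega
    rw [Fin.sum_univ_eq_sum_range (fun t => u ^ t) K, geom_sum_eq hune, huK]
    simp

lemma avg (n K : ℕ) (hK : 0 < K) (S : Finset ((Fin n → ℕ) × (Fin n → ℕ)))
    (c : ((Fin n → ℕ) × (Fin n → ℕ)) → ℂ)
    (hbound : ∀ ab ∈ S, ∀ j, ab.1 j < K ∧ ab.2 j < K) (z : Fin n → ℂ) :
    ∑ k : Fin n → Fin K, ∑ ab ∈ S, c ab *
      (∏ j, ((Complex.exp (2*Real.pi*Complex.I/K)) ^ ((k j : ℕ)) * z j) ^ (ab.1 j)) *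
      (∏ j, (starRingEnd ℂ ((Complex.exp (2*Real.pi*Complex.I/K)) ^ ((k j : ℕ)) * z j)) ^ (ab.2 j))
    = (K:ℂ)^n * ∑ ab ∈ S.filter (fun ab => ab.1 = ab.2), c ab *
      (∏ j, (z j) ^ (ab.1 j)) * (∏ j, (starRingEnd ℂ (z j)) ^ (ab.2 j)) := by
  classical
  set ω : ℂ := Complex.exp (2*Real.pi*Complex.I/K) with hω
  rw [Finset.sum_comm]
  have step : ∀ ab ∈ S, (∑ k : Fin n → Fin K, c ab *
      (∏ j, (ω ^ ((k j : ℕ)) * z j) ^ (ab.1 j)) *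
      (∏ j, (starRingEnd ℂ (ω ^ ((k j : ℕ)) * z j)) ^ (ab.2 j)))
      = (if ab.1 = ab.2 then (K:ℂ)^n else 0) *
        (c ab * (∏ j, (z j) ^ (ab.1 j)) * (∏ j, (starRingEnd ℂ (z j)) ^ (ab.2 j))) := by
    intro ab hab
    have hterm : ∀ k : Fin n → Fin K, c ab *
        (∏ j, (ω ^ ((k j : ℕ)) * z j) ^ (ab.1 j)) *
        (∏ j, (starRingEnd ℂ (ω ^ ((k j : ℕ)) * z j)) ^ (ab.2 j))
        = (∏ j, (ω ^ (ab.1 j) * (starRingEnd ℂ ω) ^ (ab.2 j)) ^ ((k j : ℕ))) *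
          (c ab * (∏ j, (z j) ^ (ab.1 j)) * (∏ j, (starRingEnd ℂ (z j)) ^ (ab.2 j))) := by
      intro k
      have e1 : ∏ j, (ω ^ ((k j : ℕ)) * z j) ^ (ab.1 j)
          = (∏ j, (ω ^ (ab.1 j)) ^ ((k j : ℕ))) * ∏ j, (z j) ^ (ab.1 j) := by
        rw [← Finset.prod_mul_distrib]
        apply Finset.prod_congr rfl
        intro j _; ring
      have e2 : ∏ j, (starRingEnd ℂ (ω ^ ((k j : ℕ)) * z j)) ^ (ab.2 j)
          = (∏ j, ((starRingEnd ℂ ω) ^ (ab.2 j)) ^ ((k j : ℕ))) * ∏ j, (starRingEnd ℂ (z j)) ^ (ab.2 j) := by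
        rw [← Finset.prod_mul_distrib]
        apply Finset.prod_congr rfl
        intro j _
        rw [map_mul, map_pow]
        ring
      have e3 : ∏ j, (ω ^ (ab.1 j) * (starRingEnd ℂ ω) ^ (ab.2 j)) ^ ((k j : ℕ))
          = (∏ j, (ω ^ (ab.1 j)) ^ ((k j : ℕ))) * ∏ j, ((starRingEnd ℂ ω) ^ (ab.2 j)) ^ ((k j : ℕ)) := by
        rw [← Finset.prod_mul_distrib]
        apply Finset.prod_congr rfl
        intro j _; ring
      rw [e1, e2, e3]; ring
    calc (∑ k : Fin n → Fin K, c ab *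
        (∏ j, (ω ^ ((k j : ℕ)) * z j) ^ (ab.1 j)) *
        (∏ j, (starRingEnd ℂ (ω ^ ((k j : ℕ)) * z j)) ^ (ab.2 j)))
        = (∑ k : Fin n → Fin K, ∏ j, (ω ^ (ab.1 j) * (starRingEnd ℂ ω) ^ (ab.2 j)) ^ ((k j : ℕ))) *
          (c ab * (∏ j, (z j) ^ (ab.1 j)) * (∏ j, (starRingEnd ℂ (z j)) ^ (ab.2 j))) := by
          rw [Finset.sum_mul]
          exact Finset.sum_congr rfl (fun k _ => hterm k)
      _ = (∏ j, ∑ t : Fin K, (ω ^ (ab.1 j) * (starRingEnd ℂ ω) ^ (ab.2 j)) ^ ((t : ℕ))) *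
          (c ab * (∏ j, (z j) ^ (ab.1 j)) * (∏ j, (starRingEnd ℂ (z j)) ^ (ab.2 j))) := by
          congr 1
          rw [Finset.prod_univ_sum (fun _ => (univ : Finset (Fin K)))
            (fun j t => (ω ^ (ab.1 j) * (starRingEnd ℂ ω) ^ (ab.2 j)) ^ ((t : ℕ)))]
          rw [Fintype.piFinset_univ]
      _ = (if ab.1 = ab.2 then (K:ℂ)^n else 0) *
          (c ab * (∏ j, (z j) ^ (ab.1 j)) * (∏ j, (starRingEnd ℂ (z j)) ^ (ab.2 j))) := by
          congr 1
          have horth : ∀ j, (∑ t : Fin K, (ω ^ (ab.1 j) * (starRingEnd ℂ ω) ^ (ab.2 j)) ^ ((t : ℕ)))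
              = if ab.1 j = ab.2 j then (K:ℂ) else 0 := fun j =>
            orth K hK (ab.1 j) (ab.2 j) (hbound ab hab j).1 (hbound ab hab j).2
          rw [Finset.prod_congr rfl (fun j _ => horth j)]
          by_cases h : ab.1 = ab.2
          · rw [if_pos h]
            rw [Finset.prod_congr rfl (fun j _ => if_pos (congrFun h j))]
            simp
          · rw [if_neg h]
            obtain ⟨j, hj⟩ : ∃ j, ab.1 j ≠ ab.2 j := by
              by_contra hc; push_neg at hc; exact h (funext hc)
            exact Finset.prod_eq_zero (mem_univ j) (if_neg hj)
  rw [Finset.sum_congr rfl step]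
  simp only [ite_mul, zero_mul]
  rw [← Finset.sum_filter, Finset.mul_sum]

theorem stmt_11 (n : ℕ)
    (S : Finset ((Fin n → ℕ) × (Fin n → ℕ)))
    (c : (Fin n → ℕ) × (Fin n → ℕ) → ℂ)
    (P : (Fin n → ℂ) → ℂ)
    (hP : ∀ z, P z = ∑ ab ∈ S, c ab *
      (∏ j, (z j) ^ (ab.1 j)) * (∏ j, (starRingEnd ℂ (z j)) ^ (ab.2 j)))
    (hreal : ∀ z, (P z).im = 0)
    (hnonneg : ∀ z, 0 ≤ (P z).re)
    (hne : ∃ z, P z ≠ 0) :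
    ∃ α : Fin n → ℕ, (α, α) ∈ S ∧ (c (α, α)).im = 0 ∧ 0 < (c (α, α)).re ∧
      ∀ β : Fin n → ℕ, (β, β) ∈ S → c (β, β) ≠ 0 → RevLexLE β α := by
  classical
  obtain ⟨z₀, hz₀⟩ := hne
  set K : ℕ := 1 + S.sup (fun ab => Finset.univ.sup (fun j => max (ab.1 j) (ab.2 j))) with hKdef
  have hK : 0 < K := by omega
  have hbound : ∀ ab ∈ S, ∀ j, ab.1 j < K ∧ ab.2 j < K := by
    intro ab hab j
    have h1 : (Finset.univ.sup (fun j => max (ab.1 j) (ab.2 j))) ≤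
        S.sup (fun ab => Finset.univ.sup (fun j => max (ab.1 j) (ab.2 j))) :=
      Finset.le_sup (f := fun ab => Finset.univ.sup (fun j => max (ab.1 j) (ab.2 j))) hab
    have h2 : max (ab.1 j) (ab.2 j) ≤ Finset.univ.sup (fun j => max (ab.1 j) (ab.2 j)) :=
      Finset.le_sup (f := fun j => max (ab.1 j) (ab.2 j)) (mem_univ j)
    have h3 := le_trans h2 h1
    have h4 : ab.1 j ≤ max (ab.1 j) (ab.2 j) := le_max_left _ _
    have h5 : ab.2 j ≤ max (ab.1 j) (ab.2 j) := le_max_right _ _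
    omega
  set ω : ℂ := Complex.exp (2*Real.pi*Complex.I/K) with hω
  set F : Finset ((Fin n → ℕ) × (Fin n → ℕ)) := S.filter (fun ab => ab.1 = ab.2) with hF
  set Qf : (Fin n → ℂ) → ℂ := fun z => ∑ ab ∈ F, c ab *
      (∏ j, (z j) ^ (ab.1 j)) * (∏ j, (starRingEnd ℂ (z j)) ^ (ab.2 j)) with hQf
  have key : ∀ z : Fin n → ℂ,
      (∑ k : Fin n → Fin K, P (fun j => ω ^ ((k j : ℕ)) * z j)) = (K:ℂ)^n * Qf z := by
    intro z
    calc (∑ k : Fin n → Fin K, P (fun j => ω ^ ((k j : ℕ)) * z j))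
        = ∑ k : Fin n → Fin K, ∑ ab ∈ S, c ab *
          (∏ j, (ω ^ ((k j : ℕ)) * z j) ^ (ab.1 j)) *
          (∏ j, (starRingEnd ℂ (ω ^ ((k j : ℕ)) * z j)) ^ (ab.2 j)) :=
          Finset.sum_congr rfl (fun k _ => hP _)
      _ = (K:ℂ)^n * Qf z := avg n K hK S c hbound z
  have hKRpos : (0:ℝ) < (K:ℝ)^n := by positivity
  have hcast : ((K:ℂ)^n) = (((K:ℝ)^n : ℝ) : ℂ) := by push_cast; ring
  have hQim : ∀ z, (Qf z).im = 0 := by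
    intro z
    have h := congrArg Complex.im (key z)
    rw [Complex.im_sum] at h
    simp only [hreal, Finset.sum_const_zero] at h
    rw [hcast, Complex.im_ofReal_mul] at h
    have := h.symm
    exact (mul_eq_zero.mp this).resolve_left hKRpos.ne'
  have hQre : ∀ z, 0 ≤ (Qf z).re := by
    intro z
    have h := congrArg Complex.re (key z)
    rw [Complex.re_sum, hcast, Complex.re_ofReal_mul] at h
    have hsum : 0 ≤ ∑ k : Fin n → Fin K, (P (fun j => ω ^ ((k j : ℕ)) * z j)).re :=
      Finset.sum_nonneg (fun k _ => hnonneg _)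
    rw [h] at hsum
    nlinarith [hsum, hKRpos]
  have hPz0 : 0 < (P z₀).re := by
    rcases lt_or_eq_of_le (hnonneg z₀) with h | h
    · exact h
    · exfalso
      exact hz₀ (Complex.ext h.symm (hreal z₀))
  have hQ0 : 0 < (Qf z₀).re := by
    have h := congrArg Complex.re (key z₀)
    rw [Complex.re_sum, hcast, Complex.re_ofReal_mul] at h
    have hle : (P z₀).re ≤ ∑ k : Fin n → Fin K, (P (fun j => ω ^ ((k j : ℕ)) * z₀ j)).re := by
      have h0 : (P (fun j => ω ^ (((fun _ : Fin n => (⟨0, hK⟩ : Fin K)) j : ℕ)) * z₀ j)).re = (P z₀).re := by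
        congr 1
        congr 1
        funext j
        simp
      calc (P z₀).re = (P (fun j => ω ^ (((fun _ : Fin n => (⟨0, hK⟩ : Fin K)) j : ℕ)) * z₀ j)).re := h0.symm
        _ ≤ ∑ k : Fin n → Fin K, (P (fun j => ω ^ ((k j : ℕ)) * z₀ j)).re :=
          Finset.single_le_sum (f := fun k : Fin n → Fin K => (P (fun j => ω ^ ((k j : ℕ)) * z₀ j)).re)
            (fun k _ => hnonneg _) (mem_univ _)
    rw [h] at hle
    nlinarith [hle, hPz0, hKRpos]
  set W : (Fin n → ℕ) → ℕ := fun α => ∑ i, α i * K^(i:ℕ) with hW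
  have hmemF : ∀ ab ∈ F, ab ∈ S ∧ ab.1 = ab.2 := fun ab hab => Finset.mem_filter.mp hab
  have hWinj : ∀ ab ∈ F, ∀ ab' ∈ F, W ab.1 = W ab'.1 → ab = ab' := by
    intro ab hab ab' hab' hWeq
    obtain ⟨habS, hab12⟩ := hmemF ab hab
    obtain ⟨habS', hab12'⟩ := hmemF ab' hab'
    have h1 : ab.1 = ab'.1 := by
      by_contra hne
      obtain ⟨j, hj, htail⟩ := exists_max_diff hne
      rcases Nat.lt_trichotomy (ab.1 j) (ab'.1 j) with h | h | h
      · exact absurd hWeq (Nat.ne_of_lt (weight_lt (fun i => (hbound ab habS i).1) j h htail))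
      · exact hj h
      · exact absurd hWeq.symm (Nat.ne_of_lt (weight_lt (fun i => (hbound ab' habS' i).1) j h
          (fun i hi => (htail i hi).symm)))
    exact Prod.ext h1 (by rw [← hab12, ← hab12', h1])
  -- substitution z_j = s ^ (K^j)
  have hQζ : ∀ s : ℝ, Qf (fun j => ((s:ℂ)) ^ (K^(j:ℕ))) = ∑ ab ∈ F, c ab * (((s ^ (2 * W ab.1) : ℝ)) : ℂ) := by
    intro s
    apply Finset.sum_congr rfl
    intro ab hab
    obtain ⟨habS, hab12⟩ := hmemF ab hab
    have e1 : ∏ j : Fin n, (((s:ℂ)) ^ (K^(j:ℕ))) ^ (ab.1 j) = ((s:ℂ)) ^ (W ab.1) := by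
      rw [hW]
      calc ∏ j : Fin n, (((s:ℂ)) ^ (K^(j:ℕ))) ^ (ab.1 j) = ∏ j : Fin n, ((s:ℂ)) ^ (ab.1 j * K^(j:ℕ)) := by
            apply Finset.prod_congr rfl
            intro j _
            rw [← pow_mul, Nat.mul_comm]
        _ = ((s:ℂ)) ^ (∑ j, ab.1 j * K^(j:ℕ)) := Finset.prod_pow_eq_pow_sum _ _ _
    have e2 : ∏ j : Fin n, (starRingEnd ℂ (((s:ℂ)) ^ (K^(j:ℕ)))) ^ (ab.2 j) = ((s:ℂ)) ^ (W ab.1) := by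
      have : ∀ j : Fin n, (starRingEnd ℂ (((s:ℂ)) ^ (K^(j:ℕ)))) ^ (ab.2 j) = (((s:ℂ)) ^ (K^(j:ℕ))) ^ (ab.1 j) := by
        intro j
        rw [← hab12, map_pow, Complex.conj_ofReal]
      rw [Finset.prod_congr rfl (fun j _ => this j), e1]
    rw [e1, e2]
    rw [mul_assoc, ← pow_add, Complex.ofReal_pow]
    congr 2
    omega
  set pim : Polynomial ℝ := ∑ ab ∈ F, Polynomial.C (c ab).im * Polynomial.X ^ (2 * W ab.1) with hpim
  set pre : Polynomial ℝ := ∑ ab ∈ F, Polynomial.C (c ab).re * Polynomial.X ^ (2 * W ab.1) with hpre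
  have heval : ∀ (v : ((Fin n → ℕ) × (Fin n → ℕ)) → ℝ) (s : ℝ),
      (∑ ab ∈ F, Polynomial.C (v ab) * Polynomial.X ^ (2 * W ab.1)).eval s
      = ∑ ab ∈ F, v ab * s ^ (2 * W ab.1) := by
    intro v s
    rw [Polynomial.eval_finset_sum]
    apply Finset.sum_congr rfl
    intro ab _
    simp
  have hcoeff : ∀ (v : ((Fin n → ℕ) × (Fin n → ℕ)) → ℝ), ∀ ab ∈ F,
      (∑ ab' ∈ F, Polynomial.C (v ab') * Polynomial.X ^ (2 * W ab'.1)).coeff (2 * W ab.1) = v ab := by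
    intro v ab hab
    rw [Polynomial.finset_sum_coeff]
    rw [Finset.sum_eq_single_of_mem ab hab]
    · simp
    · intro ab' hab' hne
      rw [Polynomial.coeff_C_mul, Polynomial.coeff_X_pow, if_neg, mul_zero]
      intro heq
      exact hne (hWinj ab' hab' ab hab (by omega))
  have him : ∀ ab ∈ F, (c ab).im = 0 := by
    have hzero : pim = 0 := by
      apply Polynomial.funext
      intro s
      rw [hpim, heval, Polynomial.eval_zero]
      have h := hQim (fun j => ((s:ℂ)) ^ (K^(j:ℕ)))
      rw [hQζ s, Complex.im_sum] at h
      rw [← h]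
      apply Finset.sum_congr rfl
      intro ab _
      rw [Complex.mul_im, Complex.ofReal_re, Complex.ofReal_im]
      ring
    intro ab hab
    have := hcoeff (fun ab => (c ab).im) ab hab
    rw [← hpim, hzero] at this
    simpa using this.symm
  have heval_re : ∀ s : ℝ, pre.eval s = (Qf (fun j => ((s:ℂ)) ^ (K^(j:ℕ)))).re := by
    intro s
    rw [hpre, heval, hQζ s, Complex.re_sum]
    apply Finset.sum_congr rfl
    intro ab _
    rw [Complex.mul_re, Complex.ofReal_re, Complex.ofReal_im]
    ring
  have hprene : pre ≠ 0 := by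
    intro h0
    have hc0 : ∀ ab ∈ F, c ab = 0 := by
      intro ab hab
      have hre := hcoeff (fun ab => (c ab).re) ab hab
      rw [← hpre, h0] at hre
      exact Complex.ext (by simpa using hre.symm) (him ab hab)
    have : Qf z₀ = 0 := Finset.sum_eq_zero (fun ab hab => by rw [hc0 ab hab]; ring)
    rw [this] at hQ0
    simp at hQ0
  have hLpos : 0 < pre.leadingCoeff := by
    rcases lt_trichotomy pre.leadingCoeff 0 with hneg | hzero | hpos
    · exfalso
      by_cases hdeg : 0 < pre.degree
      · have htend := Polynomial.tendsto_atBot_of_leadingCoeff_nonpos pre hdeg hneg.le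
        obtain ⟨s, hs⟩ := (htend.eventually (Filter.eventually_lt_atBot (0:ℝ))).exists
        rw [heval_re] at hs
        exact absurd hs (not_lt.mpr (hQre _))
      · push_neg at hdeg
        have hC : pre = Polynomial.C (pre.coeff 0) := Polynomial.eq_C_of_degree_le_zero hdeg
        have hnd : pre.natDegree = 0 := Polynomial.natDegree_eq_zero_iff_degree_le_zero.mpr hdeg
        have hl : pre.leadingCoeff = pre.coeff 0 := by rw [Polynomial.leadingCoeff, hnd]
        have := hQre (fun j => ((1:ℝ):ℂ) ^ (K^(j:ℕ)))
        rw [← heval_re 1, hC] at this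
        simp at this
        rw [hl] at hneg
        linarith
    · exact absurd (Polynomial.leadingCoeff_eq_zero.mp hzero) hprene
    · exact hpos
  have hcoeffD : pre.coeff pre.natDegree ≠ 0 := by
    rw [← Polynomial.leadingCoeff]
    exact hLpos.ne'
  have hexp : pre.coeff pre.natDegree = ∑ ab ∈ F, (c ab).re * (if pre.natDegree = 2 * W ab.1 then 1 else 0) := by
    rw [hpre, Polynomial.finset_sum_coeff]
    apply Finset.sum_congr rfl
    intro ab _
    rw [Polynomial.coeff_C_mul, Polynomial.coeff_X_pow]
  obtain ⟨ab₀, hab₀F, hab₀ne⟩ := Finset.exists_ne_zero_of_sum_ne_zero (hexp ▸ hcoeffD)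
  have hD : pre.natDegree = 2 * W ab₀.1 := by
    by_contra h
    rw [if_neg h, mul_zero] at hab₀ne
    exact hab₀ne rfl
  have hcre : (c ab₀).re = pre.leadingCoeff := by
    have h1 := hcoeff (fun ab => (c ab).re) ab₀ hab₀F
    rw [← hpre, ← hD] at h1
    rw [← h1, Polynomial.coeff_natDegree]
  obtain ⟨hab₀S, hab₀12⟩ := hmemF ab₀ hab₀F
  have hab₀eq : ab₀ = (ab₀.1, ab₀.1) := by
    rw [Prod.ext_iff]
    exact ⟨rfl, hab₀12.symm⟩
  refine ⟨ab₀.1, by rw [← hab₀eq]; exact hab₀S, by rw [← hab₀eq]; exact him ab₀ hab₀F,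
    by rw [← hab₀eq, hcre]; exact hLpos, ?_⟩
  intro β hβS hβne
  have hβF : (β, β) ∈ F := Finset.mem_filter.mpr ⟨hβS, rfl⟩
  have hβim : (c (β, β)).im = 0 := him _ hβF
  have hβre : (c (β, β)).re ≠ 0 := by
    intro h
    exact hβne (Complex.ext h hβim)
  have hβcoeff : pre.coeff (2 * W β) ≠ 0 := by
    have := hcoeff (fun ab => (c ab).re) (β, β) hβF
    rw [← hpre] at this
    simpa [this] using hβre
  have hβle : 2 * W β ≤ 2 * W ab₀.1 := by
    rw [← hD]
    exact Polynomial.le_natDegree_of_ne_zero hβcoeff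
  by_cases hβeq : β = ab₀.1
  · exact Or.inl hβeq
  · obtain ⟨j, hj, htail⟩ := exists_max_diff hβeq
    rcases Nat.lt_trichotomy (β j) (ab₀.1 j) with h | h | h
    · exact Or.inr ⟨j, h, htail⟩
    · exact absurd h hj
    · exfalso
      have : W ab₀.1 < W β := weight_lt (fun i => (hbound ab₀ hab₀S i).1) j h
        (fun i hi => (htail i hi).symm)
      omega
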